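/- For the specific a-color-list L of C_{2p} (p ≥ 2, a < b(2 + 1/p)) defined by: L(0) = L(1) = {1,…,a}; for odd i ≠ 2p−1, L(i) = {((i−1)/2)a + 1, …, ((i−1)/2)a + a}; for even i ≠ 0, L(i) = {b + ((i−2)/2)a + 1, …, b + ((i−2)/2 + 1)a}; and L(2p−1) = {1,…,b} ∪ {(p−1)a + 1, …, pa − b}; there is no (L,b)-coloring c of C_{2p} with c(0) = {1,…,b}. -/

import Mathlib

/-- The specific `a`-color-list of `C_{2p}` from Lemma 1 of the paper. -/
noncomputable def L6 (a b p : ℕ) (i : ℕ) : Finset ℤ :=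
  if i = 0 ∨ i = 1 then Finset.Icc 1 (a : ℤ)
  else if i = 2 * p - 1 then
    Finset.Icc 1 (b : ℤ) ∪ Finset.Icc (((p : ℤ) - 1) * a + 1) ((p : ℤ) * a - b)
  else if i % 2 = 1 then
    Finset.Icc (((((i - 1) / 2) * a : ℕ) : ℤ) + 1) (((((i - 1) / 2) * a : ℕ) : ℤ) + a)
  else
    Finset.Icc ((b : ℤ) + ((((i - 2) / 2) * a : ℕ) : ℤ) + 1)
      ((b : ℤ) + (((((i - 2) / 2) + 1) * a : ℕ) : ℤ))

lemma split_card6 (S : Finset ℤ) (lo m hi : ℤ) (hS : S ⊆ Finset.Icc lo hi)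
    (h1 : lo ≤ m + 1) (h2 : m ≤ hi) :
    (S ∩ Finset.Icc lo m).card + (S ∩ Finset.Icc (m+1) hi).card = S.card := by
  have hI : Finset.Icc lo m ∪ Finset.Icc (m+1) hi = Finset.Icc lo hi := by
    ext x; simp only [Finset.mem_union, Finset.mem_Icc]; omega
  have hu : (S ∩ Finset.Icc lo m) ∪ (S ∩ Finset.Icc (m+1) hi) = S := by
    rw [← Finset.inter_union_distrib_left, hI, Finset.inter_eq_left.mpr hS]
  have hd : Disjoint (S ∩ Finset.Icc lo m) (S ∩ Finset.Icc (m+1) hi) := by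
    rw [Finset.disjoint_left]
    intro x hx hy
    simp only [Finset.mem_inter, Finset.mem_Icc] at hx hy
    omega
  rw [← Finset.card_union_of_disjoint hd, hu]

lemma two_disj6 (S T I : Finset ℤ) (h : Disjoint S T) :
    (S ∩ I).card + (T ∩ I).card ≤ I.card := by
  rw [← Finset.card_union_of_disjoint (h.mono Finset.inter_subset_left Finset.inter_subset_left)]
  exact Finset.card_le_card
    (Finset.union_subset Finset.inter_subset_right Finset.inter_subset_right)

lemma L6_odd (a b p k : ℕ) (hk : k + 1 < p) :
    L6 a b p (2*k+1) = Finset.Icc ((k:ℤ)*a + 1) ((k:ℤ)*a + a) := by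
  unfold L6
  rcases Nat.eq_zero_or_pos k with hk0 | hk0
  · subst hk0
    rw [if_pos (by omega)]
    norm_num
  · rw [if_neg (by omega), if_neg (by omega), if_pos (by omega)]
    have h2 : (2*k+1-1)/2 = k := by omega
    rw [h2]
    push_cast
    ring_nf

lemma L6_even (a b p k : ℕ) (hk : k + 1 < p) :
    L6 a b p (2*k+2) = Finset.Icc ((b:ℤ) + (k:ℤ)*a + 1) ((b:ℤ) + ((k:ℤ)+1)*a) := by
  unfold L6
  rw [if_neg (by omega), if_neg (by omega), if_neg (by omega)]
  have h2 : (2*k+2-2)/2 = k := by omega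
  rw [h2]
  push_cast
  ring_nf

lemma L6_last (a b p : ℕ) (hp : 2 ≤ p) :
    L6 a b p (2*p-1) = Finset.Icc 1 (b:ℤ) ∪ Finset.Icc (((p:ℤ)-1)*a + 1) ((p:ℤ)*a - b) := by
  unfold L6
  rw [if_neg (by omega), if_pos rfl]

set_option maxHeartbeats 1600000 in
/-- for `p ≥ 2` and `a/b < 2 + 1/p`, there is no (L,b)-coloring `c`
of `C_{2p}` with the above lists such that `c 0 = {1,…,b}`. -/
theorem stmt6 (a b p : ℕ) (hp : 2 ≤ p) [NeZero (2 * p)] (ha : 0 < a) (hb : 0 < b)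
    (hab : (a : ℚ) / b < 2 + 1 / p) :
    ¬ ∃ c : Fin (2 * p) → Finset ℤ,
      (∀ i, c i ⊆ L6 a b p i.val ∧ (c i).card = b) ∧
      (∀ i : Fin (2 * p), Disjoint (c i) (c (i + 1))) ∧
      c ⟨0, by omega⟩ = Finset.Icc 1 (b : ℤ) := by
  rintro ⟨c, hC, hD, h0⟩
  have hN : 0 < 2*p := by omega
  have h1lt : 1 < 2*p := by omega
  -- Fin successor helpers
  have hsucc : ∀ (n : ℕ) (h : n + 1 < 2*p), (⟨n, by omega⟩ : Fin (2*p)) + 1 = ⟨n+1, h⟩ := by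
    intro n h
    apply Fin.ext
    simp only [Fin.add_def, Fin.val_one']
    rw [Nat.mod_eq_of_lt (show 1 < 2*p by omega), Nat.mod_eq_of_lt h]
  have hwrap : (⟨2*p-1, by omega⟩ : Fin (2*p)) + 1 = ⟨0, hN⟩ := by
    apply Fin.ext
    simp only [Fin.add_def, Fin.val_one']
    rw [Nat.mod_eq_of_lt (show 1 < 2*p by omega), Nat.sub_add_cancel (by omega), Nat.mod_self]
  -- basic arithmetic from the hypothesis
  have hpa : a * p < 2*p*b + b := by
    have hb0 : (0:ℚ) < b := by exact_mod_cast hb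
    have hp0 : (0:ℚ) < p := by exact_mod_cast (show 0 < p by omega)
    rw [div_lt_iff₀ hb0] at hab
    have h1 := mul_lt_mul_of_pos_right hab hp0
    have h2 : ((2:ℚ) + 1/(p:ℚ)) * b * p = 2*p*b + b := by field_simp
    rw [h2] at h1
    exact_mod_cast h1
  -- vertex 1 facts
  have hd01 : Disjoint (c ⟨0, hN⟩) (c ⟨1, h1lt⟩) := by
    have h := hD ⟨0, hN⟩
    rwa [hsucc 0 h1lt] at h
  have hc1sub : c ⟨1, h1lt⟩ ⊆ Finset.Icc 1 (a:ℤ) := by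
    have h := (hC ⟨1, h1lt⟩).1
    have hL : L6 a b p 1 = Finset.Icc 1 (a:ℤ) := by unfold L6; rw [if_pos (by omega)]
    rwa [show (⟨1,h1lt⟩ : Fin (2*p)).val = 1 from rfl, hL] at h
  have hc1card : (c ⟨1, h1lt⟩).card = b := (hC ⟨1, h1lt⟩).2
  have key0 : (c ⟨1,h1lt⟩ ∩ Finset.Icc 1 (b:ℤ)).card = 0 := by
    rw [Finset.card_eq_zero, ← h0]
    exact Finset.disjoint_iff_inter_eq_empty.mp hd01.symm
  have hba : b ≤ a := by
    have h := Finset.card_le_card hc1sub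
    rw [hc1card, Int.card_Icc] at h
    omega
  have h2b : 2*b ≤ a := by
    have hs := split_card6 (c ⟨1,h1lt⟩) 1 (b:ℤ) (a:ℤ) hc1sub (by omega) (by exact_mod_cast hba)
    have hsub2 : (c ⟨1,h1lt⟩ ∩ Finset.Icc ((b:ℤ)+1) (a:ℤ)).card
        ≤ (Finset.Icc ((b:ℤ)+1) (a:ℤ)).card := Finset.card_le_card Finset.inter_subset_right
    rw [Int.card_Icc] at hsub2
    omega
  have hbaZ : (b:ℤ) ≤ a := by exact_mod_cast hba
  have h2bZ : 2*(b:ℤ) ≤ a := by exact_mod_cast h2b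
  obtain ⟨e, he⟩ : ∃ e, a = 2*b + e := ⟨a - 2*b, by omega⟩
  -- main induction
  have key : ∀ k, ∀ hk : k < p,
      ((c ⟨2*k+1, by omega⟩) ∩ Finset.Icc ((k:ℤ)*a + 1) ((k:ℤ)*a + b)).card ≤ k * e := by
    intro k
    induction k with
    | zero =>
      intro hk
      have hidx : (⟨2*0+1, by omega⟩ : Fin (2*p)) = ⟨1, h1lt⟩ := Fin.ext (by norm_num)
      rw [hidx]
      norm_num [key0]
    | succ k ih =>
      intro hk
      have hk' : k < p := by omega
      have IH := ih hk'
      have lt1 : 2*k+1 < 2*p := by omega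
      have lt2 : 2*k+2 < 2*p := by omega
      have lt3 : 2*k+3 < 2*p := by omega
      have hd12 : Disjoint (c ⟨2*k+1, lt1⟩) (c ⟨2*k+2, lt2⟩) := by
        have h := hD ⟨2*k+1, lt1⟩
        rw [hsucc (2*k+1) (by omega)] at h
        exact h
      have hd23 : Disjoint (c ⟨2*k+2, lt2⟩) (c ⟨2*k+3, lt3⟩) := by
        have h := hD ⟨2*k+2, lt2⟩
        rw [hsucc (2*k+2) (by omega)] at h
        exact h
      have hs1 : c ⟨2*k+1, lt1⟩ ⊆ Finset.Icc ((k:ℤ)*a + 1) ((k:ℤ)*a + a) := by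
        have h := (hC ⟨2*k+1, lt1⟩).1
        rwa [show (⟨2*k+1,lt1⟩ : Fin (2*p)).val = 2*k+1 from rfl, L6_odd a b p k hk] at h
      have hs2 : c ⟨2*k+2, lt2⟩ ⊆ Finset.Icc ((b:ℤ) + (k:ℤ)*a + 1) (((k:ℤ)+1)*a + b) := by
        have h := (hC ⟨2*k+2, lt2⟩).1
        rw [show (⟨2*k+2,lt2⟩ : Fin (2*p)).val = 2*k+2 from rfl, L6_even a b p k hk] at h
        rwa [show (b:ℤ) + ((k:ℤ)+1)*a = ((k:ℤ)+1)*a + b from by ring] at h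
      have hcard1 : (c ⟨2*k+1, lt1⟩).card = b := (hC ⟨2*k+1, lt1⟩).2
      have hcard2 : (c ⟨2*k+2, lt2⟩).card = b := (hC ⟨2*k+2, lt2⟩).2
      have f2 := split_card6 (c ⟨2*k+1, lt1⟩) ((k:ℤ)*a + 1) ((k:ℤ)*a + b) ((k:ℤ)*a + a)
        hs1 (by linarith) (by linarith)
      have f3 := two_disj6 (c ⟨2*k+1, lt1⟩) (c ⟨2*k+2, lt2⟩)
        (Finset.Icc (((k:ℤ)*a + b) + 1) ((k:ℤ)*a + a)) hd12
      have hMi : (Finset.Icc (((k:ℤ)*a + b) + 1) ((k:ℤ)*a + a)).card = a - b := by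
        rw [Int.card_Icc]
        have : (k:ℤ)*a + a + 1 - (((k:ℤ)*a + b) + 1) = (a:ℤ) - b := by ring
        rw [this]
        omega
      -- rewrite c i2's list pieces: mid piece equals the one in f3
      have f4 := split_card6 (c ⟨2*k+2, lt2⟩) ((b:ℤ) + (k:ℤ)*a + 1) (((k:ℤ)+1)*a)
        (((k:ℤ)+1)*a + b) hs2 (by linarith) (by linarith)
      have hmid_eq : Finset.Icc ((b:ℤ) + (k:ℤ)*a + 1) (((k:ℤ)+1)*a)
          = Finset.Icc (((k:ℤ)*a + b) + 1) ((k:ℤ)*a + a) := by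
        congr 1 <;> ring
      rw [hmid_eq] at f4
      have f5 := two_disj6 (c ⟨2*k+2, lt2⟩) (c ⟨2*k+3, lt3⟩)
        (Finset.Icc (((k:ℤ)+1)*a + 1) (((k:ℤ)+1)*a + b)) hd23
      have hLo : (Finset.Icc (((k:ℤ)+1)*a + 1) (((k:ℤ)+1)*a + b)).card = b := by
        rw [Int.card_Icc]
        have : ((k:ℤ)+1)*a + b + 1 - (((k:ℤ)+1)*a + 1) = (b:ℤ) := by ring
        rw [this]
        omega
      -- match goal with f5's second set
      have hidx3 : (⟨2*(k+1)+1, by omega⟩ : Fin (2*p)) = ⟨2*k+3, lt3⟩ := Fin.ext (by simp; omega)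
      rw [hidx3]
      push_cast
      have hprod : (k+1) * e = k*e + e := by ring
      rw [hprod]
      rw [hMi] at f3
      rw [hLo] at f5
      generalize k * e = q at IH ⊢
      omega
  -- final contradiction
  have hlast := key (p-1) (by omega)
  have ltl : 2*p-1 < 2*p := by omega
  have hidx : (⟨2*(p-1)+1, by omega⟩ : Fin (2*p)) = ⟨2*p-1, ltl⟩ := Fin.ext (by simp; omega)
  rw [hidx] at hlast
  have hcast : (((p-1 : ℕ)):ℤ) = (p:ℤ) - 1 := by
    have : (1:ℕ) ≤ p := by omega
    push_cast [this]
    ring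
  rw [hcast] at hlast
  have hdlast : Disjoint (c ⟨2*p-1, ltl⟩) (c ⟨0, hN⟩) := by
    have h := hD ⟨2*p-1, ltl⟩
    rwa [hwrap] at h
  have hsub : c ⟨2*p-1, ltl⟩ ⊆ Finset.Icc (((p:ℤ)-1)*a + 1) ((p:ℤ)*a - b) := by
    intro x hx
    have hx2 := (hC ⟨2*p-1, ltl⟩).1 hx
    rw [show (⟨2*p-1,ltl⟩ : Fin (2*p)).val = 2*p-1 from rfl, L6_last a b p hp] at hx2
    rcases Finset.mem_union.mp hx2 with h | h
    · exfalso
      have hx0 : x ∈ c ⟨0, hN⟩ := by rw [h0]; exact h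
      exact Finset.disjoint_left.mp hdlast hx hx0
    · exact h
  have hScard : (c ⟨2*p-1, ltl⟩).card = b := (hC ⟨2*p-1, ltl⟩).2
  have fsplit := split_card6 (c ⟨2*p-1, ltl⟩) (((p:ℤ)-1)*a + 1) (((p:ℤ)-1)*a + b)
    ((p:ℤ)*a - b) hsub (by linarith) (by
      have hpZ : (2:ℤ) ≤ p := by exact_mod_cast hp
      nlinarith)
  have hr : ((c ⟨2*p-1, ltl⟩) ∩ Finset.Icc ((((p:ℤ)-1)*a + b) + 1) ((p:ℤ)*a - b)).card ≤ e := by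
    have h : ((c ⟨2*p-1, ltl⟩) ∩ Finset.Icc ((((p:ℤ)-1)*a + b) + 1) ((p:ℤ)*a - b)).card
        ≤ (Finset.Icc ((((p:ℤ)-1)*a + b) + 1) ((p:ℤ)*a - b)).card :=
      Finset.card_le_card Finset.inter_subset_right
    rw [Int.card_Icc] at h
    have heq : (p:ℤ)*a - b + 1 - ((((p:ℤ)-1)*a + b) + 1) = (a:ℤ) - 2*b := by ring
    rw [heq] at h
    omega
  have hpe : p * e < b := by
    have h1 : a * p = 2*p*b + p*e := by rw [he]; ring
    rw [h1] at hpa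
    exact Nat.lt_of_add_lt_add_left hpa
  have hfin : (p-1)*e + e = p*e := by
    obtain ⟨q, rfl⟩ : ∃ q, p = q + 1 := ⟨p-1, by omega⟩
    simp
    ring
  generalize (p-1)*e = A at hlast hfin
  generalize p*e = B at hpe hfin
  omega
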